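/- Let E_1,…,E_D be real numbers with mean μ = (1/D)Σ_n E_n and spectral variance σ² = (1/D)Σ_n (E_n − μ)². Define K(t) = (1/D²)|Σ_n e^{-iE_n t}|². Then for all t with |t| < π/(2σ), K(t) ≥ cos²(σ t). -/

import Mathlib

open Real

lemma sin_ratio {u y : ℝ} (hy : 0 ≤ y) (hyu : y ≤ u) (huπ : u ≤ π) :
    Real.sin u * y ≤ Real.sin y * u := by
  rcases eq_or_lt_of_le (hy.trans hyu) with h | hu
  · have : y = 0 := le_antisymm (h ▸ hyu) hy
    simp [← h, this]
  · have hb : 0 ≤ y / u := div_nonneg hy hu.le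
    have ha : 0 ≤ 1 - y / u := by
      have : y / u ≤ 1 := (div_le_one hu).2 hyu
      linarith
    have hcc := strictConcaveOn_sin_Icc.concaveOn
    have := hcc.2 (x := 0) (y := u)
      ⟨le_rfl, pi_pos.le⟩ ⟨hu.le, huπ⟩ ha hb (by ring)
    simp only [smul_eq_mul, mul_zero, zero_add, Real.sin_zero] at this
    have h2 : y / u * u = y := div_mul_cancel₀ y hu.ne'
    rw [h2] at this
    have := mul_le_mul_of_nonneg_right this hu.le
    calc Real.sin u * y = y / u * Real.sin u * u := by
          field_simp
      _ ≤ Real.sin y * u := this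

lemma psi_min {u : ℝ} (hu : 0 < u) (hu2 : u ≤ π / 2) (y : ℝ) :
    Real.cos u + Real.sin u / (2 * u) * u ^ 2 ≤ Real.cos y + Real.sin u / (2 * u) * y ^ 2 := by
  set c : ℝ := Real.sin u / (2 * u) with hc
  set ψ : ℝ → ℝ := fun x => Real.cos x + c * x ^ 2 with hψ
  suffices h : ∀ z : ℝ, 0 ≤ z → ψ u ≤ ψ z by
    rcases le_or_gt 0 y with hy | hy
    · exact h y hy
    · have := h (-y) (by linarith)
      simpa [hψ, Real.cos_neg] using this
  intro z hz
  have hder : ∀ x : ℝ, HasDerivAt ψ (-Real.sin x + c * (2 * x)) x := by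
    intro x
    have h1 := Real.hasDerivAt_cos x
    have h2 : HasDerivAt (fun x : ℝ => c * x ^ 2) (c * (2 * x)) x := by
      simpa using ((hasDerivAt_pow 2 x).const_mul c)
    exact h1.add h2
  have hcont : Continuous ψ := by
    fun_prop
  have hanti : AntitoneOn ψ (Set.Icc 0 u) := by
    apply antitoneOn_of_deriv_nonpos (convex_Icc 0 u) (hcont.continuousOn)
    · intro x hx
      exact (hder x).differentiableAt.differentiableWithinAt
    · intro x hx
      rw [interior_Icc] at hx
      rw [(hder x).deriv]
      have hsr : Real.sin u * x ≤ Real.sin x * u :=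
        sin_ratio hx.1.le hx.2.le (by linarith [pi_pos])
      have : c * (2 * x) ≤ Real.sin x := by
        rw [hc]
        rw [div_mul_eq_mul_div, div_le_iff₀ (by linarith)]
        calc Real.sin u * (2 * x) = 2 * (Real.sin u * x) := by ring
          _ ≤ 2 * (Real.sin x * u) := by linarith
          _ = Real.sin x * (2 * u) := by ring
      linarith
  have hmono : MonotoneOn ψ (Set.Ici u) := by
    apply monotoneOn_of_deriv_nonneg (convex_Ici u) (hcont.continuousOn)
    · intro x hx
      exact (hder x).differentiableAt.differentiableWithinAt
    · intro x hx
      rw [interior_Ici] at hx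
      rw [(hder x).deriv]
      have hxpos : 0 < x := hu.trans hx
      have key : Real.sin x ≤ c * (2 * x) := by
        rcases le_or_gt x π with hxπ | hxπ
        · have hsr : Real.sin x * u ≤ Real.sin u * x :=
            sin_ratio hu.le hx.le hxπ
          rw [hc, div_mul_eq_mul_div, le_div_iff₀ (by linarith)]
          calc Real.sin x * (2 * u) = 2 * (Real.sin x * u) := by ring
            _ ≤ 2 * (Real.sin u * x) := by linarith
            _ = Real.sin u * (2 * x) := by ring
        · have hj : 2 / π * u ≤ Real.sin u := Real.mul_le_sin hu.le hu2
          have hππ : 0 < π := pi_pos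
          have : (1 : ℝ) ≤ c * (2 * x) := by
            rw [hc, div_mul_eq_mul_div, le_div_iff₀ (by linarith)]
            have h1 : Real.sin u * (2 * x) ≥ (2 / π * u) * (2 * x) := by
              apply mul_le_mul_of_nonneg_right hj (by linarith)
            have h2 : (2 / π * u) * (2 * x) ≥ (2 / π * u) * (2 * π) := by
              apply mul_le_mul_of_nonneg_left (by linarith)
              positivity
            have h3 : (2 / π * u) * (2 * π) = 4 * u := by
              field_simp; ring
            nlinarith
          linarith [Real.sin_le_one x]
      linarith
  rcases le_or_gt z u with hzu | hzu
  · exact hanti ⟨hz, hzu⟩ ⟨hu.le, le_rfl⟩ hzu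
  · exact hmono (Set.mem_Ici.2 le_rfl) (Set.mem_Ici.2 hzu.le) hzu.le

/-- Mandelstam–Tamm-type bound on the spectral form factor:
`K(t) ≥ cos²(σ t)` for `|t| < π/(2σ)`, where `σ` is the standard deviation of the
spectrum. -/
theorem stmt5 (D : ℕ) (hD : 0 < D) (E : Fin D → ℝ) (μ σ : ℝ)
    (hμ : μ = (1 / (D : ℝ)) * ∑ n, E n)
    (hσ : σ = Real.sqrt ((1 / (D : ℝ)) * ∑ n, (E n - μ) ^ 2))
    (t : ℝ) (ht : |t| < Real.pi / (2 * σ)) :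
    Real.cos (σ * t) ^ 2 ≤
      (1 / (D : ℝ) ^ 2) * ‖∑ n, Complex.exp (-((E n * t : ℝ) : ℂ) * Complex.I)‖ ^ 2 := by
  have hDR : (0 : ℝ) < (D : ℝ) := Nat.cast_pos.2 hD
  have hσnn : 0 ≤ σ := hσ ▸ Real.sqrt_nonneg _
  have hσpos : 0 < σ := by
    rcases hσnn.eq_or_lt with h | h
    · exfalso
      rw [← h, mul_zero, div_zero] at ht
      exact absurd ht (not_lt.2 (abs_nonneg t))
    · exact h
  rcases eq_or_ne t 0 with rfl | ht0
  · have hterm : ∀ n : Fin D,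
        Complex.exp (-((E n * 0 : ℝ) : ℂ) * Complex.I) = 1 := by
      intro n; simp
    rw [Finset.sum_congr rfl (fun n _ => hterm n)]
    simp only [mul_zero, Real.cos_zero, one_pow, Finset.sum_const, Finset.card_univ,
      Fintype.card_fin, nsmul_eq_mul, mul_one, Complex.norm_natCast]
    rw [one_div, inv_mul_cancel₀ (by positivity)]
  -- main case
  have hsumsq : ∑ n, (E n - μ) ^ 2 = (D : ℝ) * σ ^ 2 := by
    have h1 : σ ^ 2 = (1 / (D : ℝ)) * ∑ n, (E n - μ) ^ 2 := by
      rw [hσ, Real.sq_sqrt]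
      positivity
    field_simp at h1
    linarith
  set u : ℝ := σ * |t| with hu_def
  have htpos : 0 < |t| := abs_pos.2 ht0
  have hu : 0 < u := mul_pos hσpos htpos
  have hu2 : u < π / 2 := by
    rw [lt_div_iff₀ (by positivity)] at ht
    calc u = σ * |t| := rfl
      _ < π / 2 := by nlinarith
  set c : ℝ := Real.sin u / (2 * u) with hc
  clear_value u c
  -- pointwise bound and sum
  have hperterm : ∀ n : Fin D,
      Real.cos u - c * (((E n - μ) * t) ^ 2 - u ^ 2) ≤ Real.cos ((E n - μ) * t) := by
    intro n
    have := psi_min hu hu2.le ((E n - μ) * t)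
    rw [← hc] at this
    have e : c * (((E n - μ) * t) ^ 2 - u ^ 2) = c * ((E n - μ) * t) ^ 2 - c * u ^ 2 := by
      ring
    rw [e]
    linarith
  have hu_sq : u ^ 2 = σ ^ 2 * t ^ 2 := by
    rw [hu_def, mul_pow, sq_abs]
  have hsum_bound : (D : ℝ) * Real.cos u ≤ ∑ n, Real.cos ((E n - μ) * t) := by
    have h1 : ∑ n : Fin D, (Real.cos u - c * (((E n - μ) * t) ^ 2 - u ^ 2))
        ≤ ∑ n, Real.cos ((E n - μ) * t) :=
      Finset.sum_le_sum fun n _ => hperterm n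
    have h2 : ∑ n : Fin D, (Real.cos u - c * (((E n - μ) * t) ^ 2 - u ^ 2))
        = (D : ℝ) * Real.cos u - c * ((∑ n, (E n - μ) ^ 2) * t ^ 2 - (D : ℝ) * u ^ 2) := by
      rw [Finset.sum_sub_distrib, Finset.sum_const, Finset.card_univ, Fintype.card_fin]
      rw [← Finset.mul_sum, Finset.sum_sub_distrib, Finset.sum_const, Finset.card_univ,
        Fintype.card_fin]
      have : ∀ n : Fin D, ((E n - μ) * t) ^ 2 = (E n - μ) ^ 2 * t ^ 2 := fun n => by ring
      rw [Finset.sum_congr rfl fun n _ => this n, ← Finset.sum_mul]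
      push_cast
      ring
    rw [h2] at h1
    rw [hsumsq, hu_sq] at h1
    have : (D : ℝ) * σ ^ 2 * t ^ 2 - (D : ℝ) * (σ ^ 2 * t ^ 2) = 0 := by ring
    rw [this, mul_zero, sub_zero] at h1
    exact h1
  -- relate to the complex sum
  set S : ℂ := ∑ n, Complex.exp (-((E n * t : ℝ) : ℂ) * Complex.I) with hS
  have hz : Complex.exp (((μ * t : ℝ) : ℂ) * Complex.I) * S
      = ∑ n, Complex.exp (((-(( E n - μ) * t) : ℝ) : ℂ) * Complex.I) := by
    rw [hS, Finset.mul_sum]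
    refine Finset.sum_congr rfl fun n _ => ?_
    rw [← Complex.exp_add]
    congr 1
    push_cast
    ring
  have hre : (Complex.exp (((μ * t : ℝ) : ℂ) * Complex.I) * S).re
      = ∑ n, Real.cos ((E n - μ) * t) := by
    rw [hz, Complex.re_sum]
    refine Finset.sum_congr rfl fun n _ => ?_
    rw [Complex.exp_ofReal_mul_I_re, Real.cos_neg]
  have hnorm : ‖Complex.exp (((μ * t : ℝ) : ℂ) * Complex.I) * S‖ = ‖S‖ := by
    rw [norm_mul]
    have : ‖Complex.exp (((μ * t : ℝ) : ℂ) * Complex.I)‖ = 1 :=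
      Complex.norm_exp_ofReal_mul_I _
    rw [this, one_mul]
  have hkey : (D : ℝ) * Real.cos u ≤ ‖S‖ := by
    calc (D : ℝ) * Real.cos u ≤ ∑ n, Real.cos ((E n - μ) * t) := hsum_bound
      _ = (Complex.exp (((μ * t : ℝ) : ℂ) * Complex.I) * S).re := hre.symm
      _ ≤ ‖Complex.exp (((μ * t : ℝ) : ℂ) * Complex.I) * S‖ :=
          Complex.re_le_norm _
      _ = ‖S‖ := hnorm
  have hcos_eq : Real.cos (σ * t) = Real.cos u := by
    rw [hu_def, ← Real.cos_abs (σ * t), abs_mul, abs_of_nonneg hσnn]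
  have hcos_nn : 0 ≤ Real.cos u := by
    apply Real.cos_nonneg_of_mem_Icc
    constructor <;> [linarith [pi_pos]; linarith]
  have hsq : ((D : ℝ) * Real.cos u) ^ 2 ≤ ‖S‖ ^ 2 := by
    apply pow_le_pow_left₀ (by positivity) hkey
  rw [hcos_eq]
  have hfin : Real.cos u ^ 2 = 1 / (D : ℝ) ^ 2 * ((D : ℝ) * Real.cos u) ^ 2 := by
    field_simp
  rw [hfin]
  apply mul_le_mul_of_nonneg_left hsq (by positivity)
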